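/- For odd n, the graph G_n has an n-dimensional orthonormal representation: there is a map f from vertices of G_n to unit vectors in R^n such that adjacent vertices map to orthogonal vectors. -/

import Mathlib

lemma hd_cast (n : ℕ) (x y : Fin n → Bool) :
    ((hammingDist x y : ℝ)) = ∑ i, (if x i ≠ y i then (1:ℝ) else 0) := by
  rw [Finset.sum_boole, hammingDist]

lemma key_sum (n : ℕ) (a b : ℝ) (x y : Fin n → Bool) :
    ∑ i, (a + b * (if x i then (1:ℝ) else 0)) * (a + b * (if y i then (1:ℝ) else 0))
      = n * a^2 + a * b * ((hammingDist x (fun _ => false) : ℝ)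
          + (hammingDist y (fun _ => false) : ℝ))
        + b^2/2 * ((hammingDist x (fun _ => false) : ℝ)
          + (hammingDist y (fun _ => false) : ℝ) - (hammingDist x y : ℝ)) := by
  have h1 : ((hammingDist x (fun _ => false) : ℝ)) = ∑ i, (if x i then (1:ℝ) else 0) := by
    rw [hd_cast]; simp
  have h2 : ((hammingDist y (fun _ => false) : ℝ)) = ∑ i, (if y i then (1:ℝ) else 0) := by
    rw [hd_cast]; simp
  rw [h1, h2, hd_cast]
  have hcard : ((n : ℝ) * a^2) = ∑ _i : Fin n, a^2 := by
    simp [Finset.sum_const, mul_comm]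
  rw [← Finset.sum_add_distrib, ← Finset.sum_sub_distrib, Finset.mul_sum, Finset.mul_sum,
    hcard, ← Finset.sum_add_distrib, ← Finset.sum_add_distrib]
  apply Finset.sum_congr rfl
  intro i _
  cases hx : x i <;> cases hy : y i <;> simp <;> ring

/-- The graph `G_n`. -/
def Gn (n : ℕ) :
    SimpleGraph {x : Fin n → Bool // hammingDist x (fun _ => false) = (n + 1) / 2} :=
  SimpleGraph.fromRel (fun x y => hammingDist x.1 y.1 = (n + 1) / 2)

theorem stmt_8 (n : ℕ) (hn : Odd n) :
    ∃ f : {x : Fin n → Bool // hammingDist x (fun _ => false) = (n + 1) / 2} →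
        EuclideanSpace ℝ (Fin n),
      (∀ u, ‖f u‖ = 1) ∧ ∀ u v, (Gn n).Adj u v → inner ℝ (f u) (f v) = (0 : ℝ) := by
  obtain ⟨m, hm⟩ := hn
  set k : ℕ := (n + 1) / 2 with hk
  have hkr : (n : ℝ) = 2 * (k : ℝ) - 1 := by
    have h : (n : ℕ) + 1 = 2 * k := by omega
    have := congrArg (fun t : ℕ => (t : ℝ)) h
    push_cast at this; linarith
  have hk1 : (1 : ℝ) ≤ (k : ℝ) := by
    have : 1 ≤ k := by omega
    exact_mod_cast this
  have hkne : (k : ℝ) ≠ 0 := by linarith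
  have hnne : (2 * (k : ℝ) - 1) ≠ 0 := by linarith
  set q : ℝ := Real.sqrt (2 * k) with hqdef
  have hq2 : q ^ 2 = 2 * k := Real.sq_sqrt (by positivity)
  set a : ℝ := (1 - q) / (2 * (k : ℝ) - 1) with ha
  set b : ℝ := q / k with hb
  refine ⟨fun u => (WithLp.toLp 2 (fun i => a + b * (if u.1 i then 1 else 0)) : EuclideanSpace ℝ (Fin n)),
    ?_, ?_⟩
  · intro u
    have hu : hammingDist u.1 (fun _ => false) = k := u.2
    have hinner : @inner ℝ (EuclideanSpace ℝ (Fin n)) _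
        (WithLp.toLp 2 (fun i => a + b * (if u.1 i then 1 else 0)))
        (WithLp.toLp 2 (fun i => a + b * (if u.1 i then 1 else 0))) = 1 := by
      simp only [PiLp.inner_apply, PiLp.toLp_apply, RCLike.inner_apply, conj_trivial]
      rw [key_sum n a b u.1 u.1, hu, hammingDist_self, hkr, ha, hb]
      push_cast
      field_simp
      linear_combination (((k:ℝ) - 1) * (2 * (k:ℝ) - 1) * (k:ℝ) + (-(k:ℝ) + (k:ℝ)^2 + 8*(k:ℝ)^3 - 16*(k:ℝ)^4 + 8*(k:ℝ)^5) + (-2*(k:ℝ) + 4*(k:ℝ)^2 - 10*(k:ℝ)^3 + 16*(k:ℝ)^4 - 8*(k:ℝ)^5)) * hq2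
    rw [norm_eq_sqrt_real_inner, hinner, Real.sqrt_one]
  · intro u v huv
    have hu : hammingDist u.1 (fun _ => false) = k := u.2
    have hv : hammingDist v.1 (fun _ => false) = k := v.2
    have hd : hammingDist u.1 v.1 = k := by
      rcases huv with ⟨hne, h | h⟩
      · exact h
      · rw [hammingDist_comm]; exact h
    simp only [PiLp.inner_apply, PiLp.toLp_apply, RCLike.inner_apply, conj_trivial]
    rw [key_sum n a b v.1 u.1, hu, hv, hammingDist_comm, hd, hkr, ha, hb]
    field_simp
    linear_combination ((-(1:ℝ)) * (2 * (k:ℝ) - 1) * (k:ℝ) + (-(k:ℝ) + (k:ℝ)^2 + 4*(k:ℝ)^3 - 4*(k:ℝ)^4) + ((k:ℝ)^2 - 4*(k:ℝ)^3 + 4*(k:ℝ)^4 - 1)) * hq2
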